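/- Let p ∈ (0,1) be a p-value and q = 1 - p the p-value of the same one-sided test under the opposite null hypothesis. Then with equal weights, the Cauchy combination statistic of (p, q) is T_CCT = (1/2)[tan((1/2-p)π) + tan((1/2-q)π)] = 0, while the truncated statistic T_TCCT = (1/2)[tan((1/2-p)π)·1{p<1/2} + tan((1/2-q)π)·1{q<1/2}] = (1/2)tan((1/2 - min(p,q))π) > 0 whenever p ≠ 1/2. -/
import Mathlib


open Real Set

lemma tan_pos_of_mem (x : ℝ) (h0 : 0 < x) (h1 : x < 1/2) : 0 < Real.tan ((1/2 - x) * π) := by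
  apply Real.tan_pos_of_pos_of_lt_pi_div_two
  · nlinarith [Real.pi_pos]
  · have : (1/2 - x) * π < (1/2) * π := by nlinarith [Real.pi_pos]
    linarith [this]

/-- For perfectly negatively dependent one-sided tests with p-values `p` and `q = 1-p`,
the equal-weight Cauchy combination statistic is 0, while the truncated statistic equals
`(1/2) tan((1/2 - min(p,q))π) > 0` whenever `p ≠ 1/2`. -/
theorem cct_zero_tcct_positive (p : ℝ) (hp : p ∈ Ioo (0 : ℝ) 1) (q : ℝ)
    (hq : q = 1 - p) :
    (1 / 2) * (tan ((1 / 2 - p) * π) + tan ((1 / 2 - q) * π)) = 0 ∧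
    (p ≠ 1 / 2 →
      (1 / 2) * ((if p < 1 / 2 then tan ((1 / 2 - p) * π) else 0) +
          (if q < 1 / 2 then tan ((1 / 2 - q) * π) else 0)) =
        (1 / 2) * tan ((1 / 2 - min p q) * π) ∧
      0 < (1 / 2) * tan ((1 / 2 - min p q) * π)) := by
  obtain ⟨hp0, hp1⟩ := hp
  have harg : (1/2 - q) * π = -((1/2 - p) * π) := by rw [hq]; ring
  constructor
  · rw [harg, Real.tan_neg]; ring
  · intro hne
    rcases lt_or_gt_of_ne hne with h | h
    · have hq2 : ¬ q < 1/2 := by rw [hq]; linarith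
      have hmin : min p q = p := min_eq_left (by rw [hq]; linarith)
      rw [if_pos h, if_neg hq2, hmin]
      exact ⟨by ring, by have := tan_pos_of_mem p hp0 h; linarith⟩
    · have hq2 : q < 1/2 := by rw [hq]; linarith
      have hp2 : ¬ p < 1/2 := by linarith
      have hmin : min p q = q := min_eq_right (by rw [hq]; linarith)
      have hq0 : 0 < q := by rw [hq]; linarith
      rw [if_neg hp2, if_pos hq2, hmin]
      exact ⟨by ring, by have := tan_pos_of_mem q hq0 hq2; linarith⟩
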